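/- Let G be a finite simple graph with vertex set V, let ρ ∈ V, let r ≥ 1 and k be natural numbers, let ω : V → ℤ be a weight function, and let W ∈ ℤ. Let S_{k,W} be the family of all subsets C ⊆ V such that ρ ∈ C, |C| = k, ω(C) = W, C is an r-dominating set of G, and the induced subgraph G[C] is connected. Let C_{k,W} be the set of all pairs (C, (C1, C2)) such that ρ ∈ C, |C| = k, ω(C) = W, C is an r-dominating set of G, and (C1, C2) is a consistent cut of G[C]. Then |S_{k,W}| ≡ |C_{k,W}| (mod 2). -/

import Mathlib

/-- `(C1, C2)` is a consistent cut of the induced subgraph `G[C]` (with root `ρ`):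
`C1` and `C2` are disjoint, their union is `C`, `ρ ∈ C1`, and no edge of `G`
joins a vertex of `C1` to a vertex of `C2`. -/
def IsConsistentCut {V : Type*} (G : SimpleGraph V) (ρ : V) (C C1 C2 : Set V) : Prop :=
  Disjoint C1 C2 ∧ C1 ∪ C2 = C ∧ ρ ∈ C1 ∧ ∀ u ∈ C1, ∀ v ∈ C2, ¬ G.Adj u v

/-- `D` is an `r`-dominating set of `G`: every vertex of `G` is within distance `r`
(i.e. joined by a walk of length at most `r`) of some vertex of `D`. -/
def RDominates {V : Type*} (G : SimpleGraph V) (r : ℕ) (D : Finset V) : Prop :=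
  ∀ v : V, ∃ d ∈ D, ∃ w : G.Walk v d, w.length ≤ r

namespace AuxParityCut

variable {V : Type*}

/-- Vertices of `C` that cannot reach `ρ` inside `G[C]`. -/
def badSet (G : SimpleGraph V) (ρ : V) (C : Set V) : Set V :=
  {u : V | ∃ hu : u ∈ C, ∀ hρ : ρ ∈ C, ¬ (G.induce C).Reachable ⟨u, hu⟩ ⟨ρ, hρ⟩}

lemma badSet_subset (G : SimpleGraph V) (ρ : V) (C : Set V) : badSet G ρ C ⊆ C :=
  fun _ h => h.1

lemma rho_not_mem_badSet (G : SimpleGraph V) (ρ : V) {C : Set V} (hρ : ρ ∈ C) :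
    ρ ∉ badSet G ρ C := by
  rintro ⟨hρ', h⟩
  exact h hρ (SimpleGraph.Reachable.refl _)

lemma badSet_closed (G : SimpleGraph V) (ρ : V) {C : Set V} {u w : V}
    (hu : u ∈ badSet G ρ C) (hw : w ∈ C) (hadj : G.Adj u w) : w ∈ badSet G ρ C := by
  obtain ⟨huC, h⟩ := hu
  refine ⟨hw, fun hρ hr => h hρ ?_⟩
  have hadj' : (G.induce C).Adj ⟨u, huC⟩ ⟨w, hw⟩ := by
    simp [hadj]
  exact hadj'.reachable.trans hr

lemma badSet_nonempty (G : SimpleGraph V) (ρ : V) {C : Set V} (hρ : ρ ∈ C)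
    (h : ¬ (G.induce C).Connected) : (badSet G ρ C).Nonempty := by
  by_contra hne
  rw [Set.not_nonempty_iff_eq_empty] at hne
  apply h
  have hreach : ∀ x : C, (G.induce C).Reachable x ⟨ρ, hρ⟩ := by
    intro x
    by_contra hx
    have : (x : V) ∈ badSet G ρ C := ⟨x.2, fun hρ' hr => hx (by convert hr)⟩
    simp [hne] at this
  haveI : Nonempty C := ⟨⟨ρ, hρ⟩⟩
  exact ⟨fun a b => (hreach a).trans (hreach b).symm⟩

lemma toggle_toggle (A B K : Set V) :
    ((A \ K ∪ B ∩ K) \ K) ∪ ((B \ K ∪ A ∩ K) ∩ K) = A := by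
  ext x
  by_cases hx : x ∈ K <;> simp [hx]

lemma toggle_cut (G : SimpleGraph V) (ρ : V) {C C1 C2 K : Set V}
    (hKC : K ⊆ C) (hρK : ρ ∉ K)
    (hcl : ∀ u ∈ K, ∀ w ∈ C, G.Adj u w → w ∈ K)
    (h : IsConsistentCut G ρ C C1 C2) :
    IsConsistentCut G ρ C ((C1 \ K) ∪ (C2 ∩ K)) ((C2 \ K) ∪ (C1 ∩ K)) := by
  obtain ⟨hdis, hun, hρ1, hedge⟩ := h
  have hdis' := Set.disjoint_left.mp hdis
  refine ⟨?_, ?_, ?_, ?_⟩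
  · rw [Set.disjoint_left]
    rintro x (⟨hx1, hxK⟩ | ⟨hx2, hxK⟩) (⟨hy2, hyK⟩ | ⟨hy1, hyK⟩)
    · exact hdis' hx1 hy2
    · exact hxK hyK
    · exact hyK hxK
    · exact hdis' hy1 hx2
  · rw [show (C1 \ K ∪ C2 ∩ K) ∪ (C2 \ K ∪ C1 ∩ K)
        = (C1 \ K ∪ C1 ∩ K) ∪ (C2 \ K ∪ C2 ∩ K) by
      ext x; by_cases hx : x ∈ K <;> simp [hx] <;> tauto]
    rw [Set.diff_union_inter, Set.diff_union_inter, hun]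
  · exact Or.inl ⟨hρ1, hρK⟩
  · have hmemC : ∀ x, x ∈ C1 ∨ x ∈ C2 → x ∈ C := by
      intro x hx; rw [← hun]; exact hx
    rintro u (⟨hu1, huK⟩ | ⟨hu2, huK⟩) v (⟨hv2, hvK⟩ | ⟨hv1, hvK⟩) hadj
    · exact hedge u hu1 v hv2 hadj
    · exact huK (hcl v hvK u (hmemC u (Or.inl hu1)) hadj.symm)
    · exact hvK (hcl u huK v (hmemC v (Or.inr hv2)) hadj)
    · exact hedge v hv1 u hu2 hadj.symm

lemma cut_unique (G : SimpleGraph V) (ρ : V) {C C1 C2 : Set V} (hρ : ρ ∈ C)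
    (hconn : (G.induce C).Connected) (h : IsConsistentCut G ρ C C1 C2) :
    C1 = C ∧ C2 = ∅ := by
  obtain ⟨hdis, hun, hρ1, hedge⟩ := h
  have key : ∀ x : C, (x : V) ∈ C1 := by
    have main : ∀ (u v : C) (_ : (G.induce C).Walk u v), (u : V) ∈ C1 → (v : V) ∈ C1 := by
      intro u v w
      induction w with
      | nil => exact id
      | @cons a b c hadj p ih =>
        intro ha
        apply ih
        have hadj' : G.Adj (a : V) (b : V) := by simpa using hadj
        have hb : (b : V) ∈ C1 ∪ C2 := by rw [hun]; exact b.2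
        rcases hb with hb | hb
        · exact hb
        · exact absurd hadj' (hedge _ ha _ hb)
    intro x
    obtain ⟨w⟩ := hconn.preconnected ⟨ρ, hρ⟩ x
    exact main _ _ w hρ1
  constructor
  · refine Set.Subset.antisymm ?_ (fun x hx => key ⟨x, hx⟩)
    rw [← hun]; exact Set.subset_union_left
  · rw [Set.eq_empty_iff_forall_notMem]
    intro x hx
    have hxC : x ∈ C := by rw [← hun]; exact Or.inr hx
    exact Set.disjoint_left.mp hdis (key ⟨x, hxC⟩) hx

end AuxParityCut

open AuxParityCut in
/-- The number of connected `r`-dominating sets of size `k`, weight `W`, containing `ρ`,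
is congruent modulo 2 to the number of pairs `(C, (C1, C2))` where `C` is an
`r`-dominating set of size `k` and weight `W` containing `ρ` and `(C1, C2)` is a
consistent cut of `G[C]`. -/
theorem num_connected_rdom_modEq_num_cuts {V : Type*} [Fintype V] [DecidableEq V]
    (G : SimpleGraph V) (ρ : V) (r k : ℕ) (hr : 1 ≤ r) (ω : V → ℤ) (W : ℤ) :
    Nat.card {C : Finset V //
        ρ ∈ C ∧ C.card = k ∧ (∑ v ∈ C, ω v) = W ∧ RDominates G r C ∧
        (G.induce (↑C : Set V)).Connected} ≡
    Nat.card {q : Finset V × (Set V × Set V) //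
        ρ ∈ q.1 ∧ q.1.card = k ∧ (∑ v ∈ q.1, ω v) = W ∧ RDominates G r q.1 ∧
        IsConsistentCut G ρ (↑q.1 : Set V) q.2.1 q.2.2} [MOD 2] := by
  classical
  set A := {q : Finset V × (Set V × Set V) //
        ρ ∈ q.1 ∧ q.1.card = k ∧ (∑ v ∈ q.1, ω v) = W ∧ RDominates G r q.1 ∧
        IsConsistentCut G ρ (↑q.1 : Set V) q.2.1 q.2.2} with hA
  set B := {C : Finset V //
        ρ ∈ C ∧ C.card = k ∧ (∑ v ∈ C, ω v) = W ∧ RDominates G r C ∧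
        (G.induce (↑C : Set V)).Connected} with hB
  haveI : Fintype A := Fintype.ofFinite _
  -- the involution
  let f : A → A := fun a =>
    if h : (G.induce (↑a.1.1 : Set V)).Connected then a
    else
      ⟨(a.1.1,
        ((a.1.2.1 \ badSet G ρ ↑a.1.1) ∪ (a.1.2.2 ∩ badSet G ρ ↑a.1.1),
         (a.1.2.2 \ badSet G ρ ↑a.1.1) ∪ (a.1.2.1 ∩ badSet G ρ ↑a.1.1))),
       a.2.1, a.2.2.1, a.2.2.2.1, a.2.2.2.2.1,
       toggle_cut G ρ (badSet_subset G ρ _)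
         (rho_not_mem_badSet G ρ (by exact_mod_cast a.2.1))
         (fun u hu w hw hadj => badSet_closed G ρ hu hw hadj)
         a.2.2.2.2.2⟩
  have hf2 : ∀ a, f (f a) = a := by
    intro a
    by_cases h : (G.induce (↑a.1.1 : Set V)).Connected
    · simp only [f, dif_pos h]
    · apply Subtype.ext
      simp only [f, dif_neg h]
      refine Prod.ext rfl (Prod.ext ?_ ?_) <;> exact toggle_toggle _ _ _
  have hfix : ∀ a : A, f a = a ↔ (G.induce (↑a.1.1 : Set V)).Connected := by
    intro a
    constructor
    · intro hfa
      by_contra h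
      have h1 : (f a).1.2.1 = (a.1.2.1 \ badSet G ρ ↑a.1.1) ∪ (a.1.2.2 ∩ badSet G ρ ↑a.1.1) := by
        simp only [f, dif_neg h]
      rw [hfa] at h1
      obtain ⟨x, hx⟩ := badSet_nonempty G ρ (by exact_mod_cast a.2.1) h
      have hxC : x ∈ (↑a.1.1 : Set V) := badSet_subset G ρ _ hx
      obtain ⟨hdis, hun, hρ1, hedge⟩ := a.2.2.2.2.2
      have hx12 : x ∈ a.1.2.1 ∪ a.1.2.2 := by rw [hun]; exact hxC
      rcases hx12 with h1' | h2'
      · rcases (h1 ▸ h1' : x ∈ (a.1.2.1 \ badSet G ρ ↑a.1.1) ∪ (a.1.2.2 ∩ badSet G ρ ↑a.1.1))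
          with ⟨_, hxK⟩ | ⟨hx2, _⟩
        · exact hxK hx
        · exact Set.disjoint_left.mp hdis h1' hx2
      · have hx1 : x ∈ a.1.2.1 := by rw [h1]; exact Or.inr ⟨h2', hx⟩
        exact Set.disjoint_left.mp hdis hx1 h2'
    · intro h
      simp only [f, dif_pos h]
  -- parity via fixed points of an involution
  let fE : Function.End A := f
  have hpow : fE ^ 2 ^ 1 = 1 := by
    have h2 : fE ^ 2 ^ 1 = fE * fE := by norm_num [sq]
    rw [h2, Function.End.mul_def, Function.End.one_def]
    funext a
    rw [Function.comp_apply, id]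
    exact hf2 a
  haveI : Fact (Nat.Prime 2) := ⟨Nat.prime_two⟩
  have hcard : Fintype.card A ≡ Fintype.card (Function.fixedPoints fE) [MOD 2] :=
    Equiv.Perm.card_fixedPoints_modEq (p := 2) (n := 1) hpow
  -- fixed points biject with connected sets
  have hbij : Nat.card B = Nat.card (Function.fixedPoints fE) := by
    apply Nat.card_eq_of_bijective
      (fun b => ⟨⟨(b.1, ((↑b.1 : Set V), (∅ : Set V))),
        b.2.1, b.2.2.1, b.2.2.2.1, b.2.2.2.2.1,
        Set.disjoint_empty _, Set.union_empty _, (by exact_mod_cast b.2.1),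
        fun u _ v hv => absurd hv (Set.notMem_empty v)⟩,
        (hfix _).2 b.2.2.2.2.2⟩)
    constructor
    · intro b1 b2 hb
      apply Subtype.ext
      have := congrArg (fun x => x.1.1.1) hb
      exact this
    · rintro ⟨a, ha⟩
      have hconn : (G.induce (↑a.1.1 : Set V)).Connected := (hfix a).1 ha
      obtain ⟨hC1, hC2⟩ := cut_unique G ρ (C := (↑a.1.1 : Set V))
        (by exact_mod_cast a.2.1) hconn a.2.2.2.2.2
      refine ⟨⟨a.1.1, a.2.1, a.2.2.1, a.2.2.2.1, a.2.2.2.2.1, hconn⟩, ?_⟩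
      apply Subtype.ext
      apply Subtype.ext
      exact Prod.ext rfl (Prod.ext hC1.symm hC2.symm)
  calc Nat.card B = Nat.card (Function.fixedPoints fE) := hbij
    _ = Fintype.card (Function.fixedPoints fE) := Nat.card_eq_fintype_card
    _ ≡ Fintype.card A [MOD 2] := hcard.symm
    _ = Nat.card A := Nat.card_eq_fintype_card.symm
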